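/- arXiv:2510.08542 — 2 statements merged into one kernel-verified Lean document; each statement's English description precedes it below -/
import Mathlib

section
/- Quasi-locality of the update matrices: Let H be an n-qubit Hamiltonian with locality k, degree d ≥ 2 and exponential growth parameter g, with 0 < β ≤ 1/(100·g·k·(d+1)). Let x, y ∈ ℝ^n be nonnegative vectors supported on sets X, Y ⊆ [n] respectively, with ‖x‖₁ = ‖y‖₁ = 1. Then for Q̂^{(i)} = Σ_{s>0} Σ_{a∈[m]^s a cluster from i} Σ_{r>0} μ_{a,r}·E_{S_{a,r}} with μ_{a,r} = 22·k·(β^s/(s−1)!)·((d+1)·k·β)^{r−1}, one has yᵀ Q̂^{(i)} x ≤ 150·k·(25·g·k·(d+1)·β)^{max(1, max(dist(i,X), dist(i,Y)) − 1)}. -/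
open scoped BigOperators
open Classical
open scoped ComplexOrder

noncomputable section

/-- Index type for the standard basis of the `n`-qubit Hilbert space `(ℂ²)^{⊗n}`. -/
abbrev QIdx (n : ℕ) := Fin n → Fin 2

/-- Operators (matrices) on the `n`-qubit Hilbert space `(ℂ²)^{⊗n}`. -/
abbrev QMat (n : ℕ) := Matrix (QIdx n) (QIdx n) ℂ

/-- The trace norm (Schatten 1-norm) of a matrix: `‖A‖₁ = tr √(AᴴA)`. -/
noncomputable def traceNorm {I : Type} [Fintype I] [DecidableEq I] (A : Matrix I I ℂ) : ℝ :=
  (((Matrix.posSemidef_conjTranspose_mul_self A).1.eigenvectorUnitary : Matrix I I ℂ) *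
    Matrix.diagonal (fun i => ((Real.sqrt
      ((Matrix.posSemidef_conjTranspose_mul_self A).1.eigenvalues i) : ℝ) : ℂ)) *
    (star ((Matrix.posSemidef_conjTranspose_mul_self A).1.eigenvectorUnitary) :
      Matrix I I ℂ)).trace.re

/-- The operator norm (spectral norm) of a complex matrix. -/
noncomputable def opNorm {I : Type} [Fintype I] [DecidableEq I] (A : Matrix I I ℂ) : ℝ :=
  ‖Matrix.toEuclideanCLM (𝕜 := ℂ) A‖

/-- The partial trace of an `n`-qubit operator over the qubit at site `i`, as an operator
on the remaining qubits. -/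
noncomputable def ptraceSite {n : ℕ} (i : Fin n) (X : QMat n) :
    Matrix ({j : Fin n // j ≠ i} → Fin 2) ({j : Fin n // j ≠ i} → Fin 2) ℂ :=
  fun a b => ∑ s : Fin 2,
    X (fun j => if h : j = i then s else a ⟨j, h⟩) (fun j => if h : j = i then s else b ⟨j, h⟩)

/-- A transport plan for a (traceless Hermitian) operator `X`: a decomposition
`X = Σ_i X_i` into Hermitian matrices with `tr_i(X_i) = 0`. -/
structure IsTransportPlan {n : ℕ} (X : QMat n) (Xs : Fin n → QMat n) : Prop where
  herm : ∀ i, (Xs i).IsHermitian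
  traceless : ∀ i, (Xs i).trace = 0
  sum_eq : ∑ i, Xs i = X
  ptrace_eq : ∀ i, ptraceSite i (Xs i) = 0

/-- The quantum Wasserstein norm of order 1 of De Palma–Marvian–Trevisan–Lloyd. -/
noncomputable def wnorm {n : ℕ} (X : QMat n) : ℝ :=
  sInf {c : ℝ | ∃ Xs : Fin n → QMat n, IsTransportPlan X Xs ∧ c = ∑ i, traceNorm (Xs i) / 2}

/-- A density matrix: positive semidefinite with unit trace. -/
def IsDensity {n : ℕ} (ρ : QMat n) : Prop := ρ.PosSemidef ∧ ρ.trace = 1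

/-- The Dobrushin influence matrix of a map `Φ = Φ₁ + ⋯ + Φ_n`:
`D_{ij} = max { ‖Φ_i(ρ − ϱ)‖_{W1} : ρ, ϱ density matrices with tr_j(ρ − ϱ) = 0 }`. -/
noncomputable def dobrushin {n : ℕ} (Φs : Fin n → (QMat n → QMat n)) :
    Matrix (Fin n) (Fin n) ℝ :=
  fun i j => sSup {w : ℝ | ∃ ρ ϱ : QMat n, IsDensity ρ ∧ IsDensity ϱ ∧
    ptraceSite j (ρ - ϱ) = 0 ∧ w = wnorm (Φs i (ρ - ϱ))}

/-- The `1 → 1` norm of a real matrix: the maximum column `ℓ₁`-norm. -/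
noncomputable def norm11 {n : ℕ} (D : Matrix (Fin n) (Fin n) ℝ) : ℝ :=
  ⨆ j, ∑ i, |D i j|

/-- `Q` is an update matrix for `Φ` if `Φ` maps any transport plan with cost vector `x`
to a transport plan with cost vector entrywise at most `Q x`. -/
def IsUpdateMatrix {n : ℕ} (Q : Matrix (Fin n) (Fin n) ℝ) (Φ : QMat n → QMat n) : Prop :=
  ∀ (X : QMat n) (Xs : Fin n → QMat n), IsTransportPlan X Xs →
    ∃ Ys : Fin n → QMat n, IsTransportPlan (Φ X) Ys ∧
      ∀ j, traceNorm (Ys j) / 2 ≤ Q.mulVec (fun i => traceNorm (Xs i) / 2) j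

/-! ### Hamiltonian combinatorics -/

/-- `M` is supported on the set of qubits `S` (i.e. `M = M_S ⊗ Id`). -/
def SupportedOn {n : ℕ} (S : Finset (Fin n)) (M : QMat n) : Prop :=
  (∀ a b : QIdx n, (∃ j, j ∉ S ∧ a j ≠ b j) → M a b = 0) ∧
  (∀ a b a' b' : QIdx n, (∀ j ∈ S, a j = a' j) → (∀ j ∈ S, b j = b' j) →
     (∀ j ∉ S, a j = b j) → (∀ j ∉ S, a' j = b' j) → M a b = M a' b')

/-- The support of an operator: the minimal set of qubits on which it acts nontrivially. -/
noncomputable def supp {n : ℕ} (M : QMat n) : Finset (Fin n) :=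
  (Finset.univ.filter fun S : Finset (Fin n) => SupportedOn S M).inf id

/-- The interaction graph of a local Hamiltonian: two distinct sites are adjacent iff
some term's support contains both. -/
def interGraph {n m : ℕ} (Hterm : Fin m → QMat n) : SimpleGraph (Fin n) where
  Adj i j := i ≠ j ∧ ∃ a, i ∈ supp (Hterm a) ∧ j ∈ supp (Hterm a)
  symm := ⟨by
    rintro i j ⟨hij, a, hi, hj⟩
    exact ⟨hij.symm, a, hj, hi⟩⟩
  loopless := ⟨by
    rintro i ⟨hii, -⟩
    exact hii rfl⟩

/-- The graph distance on sites induced by the interaction hypergraph. -/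
noncomputable def hamDist {n m : ℕ} (Hterm : Fin m → QMat n) (i j : Fin n) : ℕ :=
  (interGraph Hterm).dist i j

/-- The ball of radius `r` around site `i` in the interaction graph distance. -/
noncomputable def ballH {n m : ℕ} (Hterm : Fin m → QMat n) (i : Fin n) (r : ℕ) :
    Finset (Fin n) :=
  Finset.univ.filter fun j => hamDist Hterm i j ≤ r

/-- Distance from a site to a set of sites. -/
noncomputable def distToSet {n m : ℕ} (Hterm : Fin m → QMat n) (j : Fin n)
    (S : Finset (Fin n)) : ℕ :=
  sInf {r : ℕ | ∃ i ∈ S, hamDist Hterm j i = r}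

/-- Distance between two sets of sites. -/
noncomputable def setDist {n m : ℕ} (Hterm : Fin m → QMat n) (S T : Finset (Fin n)) : ℕ :=
  sInf {r : ℕ | ∃ i ∈ S, ∃ j ∈ T, hamDist Hterm i j = r}

/-- For `S ⊆ [n]`, the real matrix `E_S` with `(E_S)_{uv} = 1` iff `u, v ∈ S`. -/
def ESet {n : ℕ} (S : Finset (Fin n)) : Matrix (Fin n) (Fin n) ℝ :=
  fun u v => if u ∈ S ∧ v ∈ S then 1 else 0

/-- `S_a`: the union of the supports of the terms appearing in the sequence `a`. -/
noncomputable def SOf {n m : ℕ} (Hterm : Fin m → QMat n) {s : ℕ} (a : Fin s → Fin m) :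
    Finset (Fin n) :=
  Finset.univ.biUnion fun ℓ => supp (Hterm (a ℓ))

/-- `a` is a cluster from the set `S₀`: each term's support intersects `S₀` together with
the supports of the previous terms. -/
def IsClusterFrom {n m : ℕ} (Hterm : Fin m → QMat n) (S0 : Finset (Fin n)) {s : ℕ}
    (a : Fin s → Fin m) : Prop :=
  ∀ ℓ : Fin s, ∃ j ∈ supp (Hterm (a ℓ)),
    j ∈ S0 ∨ ∃ p : Fin s, p < ℓ ∧ j ∈ supp (Hterm (a p))

/-- The ball of radius `r` around a set of sites. -/
noncomputable def ballOfSet {n m : ℕ} (Hterm : Fin m → QMat n) (S : Finset (Fin n)) (r : ℕ) :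
    Finset (Fin n) :=
  Finset.univ.filter fun j => distToSet Hterm j S ≤ r

/-! ### Matrix exponentials, Gibbs states, and the balanced Lindbladian -/

/-- The matrix exponential, via its power series. -/
noncomputable def mexp {I : Type} [Fintype I] [DecidableEq I] (A : Matrix I I ℂ) :
    Matrix I I ℂ :=
  ∑' k : ℕ, ((k.factorial : ℂ)⁻¹ • A ^ k)

/-- The Gibbs state `σ = e^{−βH} / tr(e^{−βH})` at inverse temperature `β`. -/
noncomputable def gibbs {I : Type} [Fintype I] [DecidableEq I] (β : ℝ) (H : Matrix I I ℂ) :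
    Matrix I I ℂ :=
  (mexp ((-β : ℂ) • H)).trace⁻¹ • mexp ((-β : ℂ) • H)

/-- The real power `A^r` of a Hermitian matrix, via its spectral decomposition. -/
noncomputable def hermPow {I : Type} [Fintype I] [DecidableEq I] (A : Matrix I I ℂ) (r : ℝ) :
    Matrix I I ℂ :=
  if h : A.IsHermitian then
    (h.eigenvectorUnitary : Matrix I I ℂ) *
      Matrix.diagonal (fun i => ((h.eigenvalues i ^ r : ℝ) : ℂ)) *
      star (h.eigenvectorUnitary : Matrix I I ℂ)
  else 0

/-- The coherent term `G^P` of the balanced Lindbladian, defined in the eigenbasis of `σ`. -/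
noncomputable def coherentG {I : Type} [Fintype I] [DecidableEq I] (σ P : Matrix I I ℂ) :
    Matrix I I ℂ :=
  if h : σ.IsHermitian then
    let U : Matrix I I ℂ := h.eigenvectorUnitary
    let lam : I → ℝ := h.eigenvalues
    let P' : Matrix I I ℂ := star U * P * U
    let w : I → I → ℝ := fun i j =>
      (lam i ^ ((1:ℝ)/2) - lam j ^ ((1:ℝ)/2)) /
        (2 * lam i ^ ((1:ℝ)/4) * lam j ^ ((1:ℝ)/4) *
          (lam i ^ ((1:ℝ)/2) + lam j ^ ((1:ℝ)/2)))
    let G' : Matrix I I ℂ := Matrix.of (fun i j =>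
      (-Complex.I) * ((w i j : ℝ) : ℂ) *
        (∑ t, ((lam t ^ ((1:ℝ)/2) : ℝ) : ℂ) * P' i t * P' t j))
    U * G' * star U
  else 0

/-- The jump operator `A^P = σ^{1/4} P σ^{−1/4}`. -/
noncomputable def jumpA {I : Type} [Fintype I] [DecidableEq I] (σ P : Matrix I I ℂ) :
    Matrix I I ℂ :=
  hermPow σ ((1:ℝ)/4) * P * hermPow σ (-((1:ℝ)/4))

/-- The Lindblad generator `ρ ↦ −i[G,ρ] + AρA† − ½{A†A, ρ}` as a linear endomorphism. -/
noncomputable def lindbladOp {I : Type} [Fintype I] [DecidableEq I] (G A : Matrix I I ℂ) :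
    Module.End ℂ (Matrix I I ℂ) :=
  (-Complex.I) • (LinearMap.mulLeft ℂ G - LinearMap.mulRight ℂ G)
    + (LinearMap.mulRight ℂ (star A)) ∘ₗ (LinearMap.mulLeft ℂ A)
    - ((1:ℂ)/2) • (LinearMap.mulLeft ℂ (star A * A) + LinearMap.mulRight ℂ (star A * A))

/-- The balanced Lindbladian `L^P` for jump `P` with invariant state `σ`. -/
noncomputable def LP {I : Type} [Fintype I] [DecidableEq I] (σ P : Matrix I I ℂ) :
    Module.End ℂ (Matrix I I ℂ) :=
  lindbladOp (coherentG σ P) (jumpA σ P)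

/-- The three nonidentity single-qubit Pauli matrices. -/
noncomputable def pauli1 : Fin 3 → Matrix (Fin 2) (Fin 2) ℂ :=
  ![!![0, 1; 1, 0], !![0, -Complex.I; Complex.I, 0], !![1, 0; 0, -1]]

/-- The Pauli matrix `σ_p` acting at site `j` of an `n`-qubit system. -/
noncomputable def pauliAt {n : ℕ} (j : Fin n) (p : Fin 3) : QMat n :=
  fun a b => (if ∀ l, l ≠ j → a l = b l then 1 else 0) * pauli1 p (a j) (b j)

/-- The site-`j` balanced Lindbladian `L_j* = Σ_{P ∈ P_j} L^P`. -/
noncomputable def siteL {n : ℕ} (σ : QMat n) (j : Fin n) : Module.End ℂ (QMat n) :=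
  ∑ p : Fin 3, LP σ (pauliAt j p)

/-- The balanced Lindbladian `L* = Σ_j L_j*`. -/
noncomputable def fullL {n : ℕ} (σ : QMat n) : Module.End ℂ (QMat n) :=
  ∑ j, siteL σ j

/-- The quantum dynamical semigroup `e^{L}` generated by a Lindbladian, applied to a state. -/
noncomputable def superExp {n : ℕ} (L : Module.End ℂ (QMat n)) (ρ : QMat n) : QMat n :=
  ∑' k : ℕ, ((k.factorial : ℂ)⁻¹ • (L ^ k) ρ)

/-! ### Entropic quantities -/

/-- The von Neumann entropy `S(ρ) = −tr(ρ log ρ)` of a (Hermitian) matrix. -/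
noncomputable def vnEntropy {I : Type} [Fintype I] [DecidableEq I] (ρ : Matrix I I ℂ) : ℝ :=
  if h : ρ.IsHermitian then -∑ i, h.eigenvalues i * Real.log (h.eigenvalues i) else 0

/-- The reduced operator on the subsystem `S`: the partial trace over the complement of `S`. -/
noncomputable def reduceTo {n : ℕ} (S : Finset (Fin n)) (X : QMat n) :
    Matrix ({j : Fin n // j ∈ S} → Fin 2) ({j : Fin n // j ∈ S} → Fin 2) ℂ :=
  fun a b => ∑ c : {j : Fin n // j ∉ S} → Fin 2,
    X (fun j => if h : j ∈ S then a ⟨j, h⟩ else c ⟨j, h⟩)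
      (fun j => if h : j ∈ S then b ⟨j, h⟩ else c ⟨j, h⟩)

/-- The quasi-local part `Q̂⁽ⁱ⁾` of the Wasserstein update matrix of the site-`i`
Lindblad step, with coefficients `μ_{a,r} = 22 k (β^s/(s−1)!) ((d+1)kβ)^{r−1}`. -/
noncomputable def Qhat {n m : ℕ} (Hterm : Fin m → QMat n) (k d : ℕ) (β : ℝ) (i : Fin n) :
    Matrix (Fin n) (Fin n) ℝ :=
  ∑' s : ℕ, ∑' r : ℕ, ∑ a : Fin (s + 1) → Fin m,
    (if IsClusterFrom Hterm {i} a then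
        22 * (k : ℝ) * (β ^ (s + 1) / (Nat.factorial s : ℝ)) * (((d : ℝ) + 1) * k * β) ^ r
      else 0) • ESet (ballOfSet Hterm (SOf Hterm a) (r + 1))

/-! ### Auxiliary lemmas -/

section AuxLemmas

variable {n m : ℕ} (Hterm : Fin m → QMat n)

lemma aux_walk_of_common (b : Fin m) {i j : Fin n}
    (hi : i ∈ supp (Hterm b)) (hj : j ∈ supp (Hterm b)) :
    ∃ w : (interGraph Hterm).Walk i j, w.length ≤ 1 := by
  by_cases hij : i = j
  · subst hij; exact ⟨SimpleGraph.Walk.nil, by simp⟩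
  · exact ⟨SimpleGraph.Walk.cons (show (interGraph Hterm).Adj i j from ⟨hij, b, hi, hj⟩) SimpleGraph.Walk.nil, by simp⟩

lemma aux_cluster_walk (i : Fin n) {s : ℕ} (a : Fin (s + 1) → Fin m)
    (h : IsClusterFrom Hterm {i} a) :
    ∀ N : ℕ, ∀ ℓ : Fin (s + 1), (ℓ : ℕ) ≤ N → ∀ j ∈ supp (Hterm (a ℓ)),
      ∃ w : (interGraph Hterm).Walk i j, w.length ≤ (ℓ : ℕ) + 1 := by
  intro N
  induction N with
  | zero =>
    intro ℓ hℓ j hj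
    obtain ⟨j', hj', hcase⟩ := h ℓ
    rcases hcase with hji | ⟨p, hp, _⟩
    · have : j' = i := by simpa using hji
      subst this
      obtain ⟨w, hw⟩ := aux_walk_of_common Hterm (a ℓ) hj' hj
      exact ⟨w, by omega⟩
    · exfalso
      have : (p : ℕ) < (ℓ : ℕ) := hp
      omega
  | succ N ih =>
    intro ℓ hℓ j hj
    obtain ⟨j', hj', hcase⟩ := h ℓ
    rcases hcase with hji | ⟨p, hp, hjp⟩
    · have : j' = i := by simpa using hji
      subst this
      obtain ⟨w, hw⟩ := aux_walk_of_common Hterm (a ℓ) hj' hj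
      exact ⟨w, by omega⟩
    · have hpN : (p : ℕ) ≤ N := by
        have : (p : ℕ) < (ℓ : ℕ) := hp
        omega
      obtain ⟨w, hw⟩ := ih p hpN j' hjp
      by_cases hjj : j = j'
      · subst hjj
        refine ⟨w, ?_⟩
        have : (p : ℕ) < (ℓ : ℕ) := hp
        omega
      · refine ⟨w.concat (show (interGraph Hterm).Adj j' j from ⟨fun hc => hjj hc.symm, a ℓ, hj', hj⟩), ?_⟩
        rw [SimpleGraph.Walk.length_concat]
        have : (p : ℕ) < (ℓ : ℕ) := hp
        omega

lemma aux_SOf_walk (i : Fin n) {s : ℕ} (a : Fin (s + 1) → Fin m)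
    (h : IsClusterFrom Hterm {i} a) {j : Fin n} (hj : j ∈ SOf Hterm a) :
    ∃ w : (interGraph Hterm).Walk i j, w.length ≤ s + 1 := by
  rw [SOf, Finset.mem_biUnion] at hj
  obtain ⟨ℓ, -, hj⟩ := hj
  obtain ⟨w, hw⟩ := aux_cluster_walk Hterm i a h (ℓ : ℕ) ℓ le_rfl j hj
  exact ⟨w, by have := ℓ.isLt; omega⟩

/-- Geometry: any site in the `(r+1)`-ball of the support set of a cluster from `i`
is within distance `s + r + 2` of `i`. -/
lemma aux_cluster_dist (i : Fin n) {s : ℕ} (a : Fin (s + 1) → Fin m)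
    (h : IsClusterFrom Hterm {i} a) {r : ℕ} {u : Fin n}
    (hu : u ∈ ballOfSet Hterm (SOf Hterm a) (r + 1)) :
    hamDist Hterm i u ≤ s + r + 2 := by
  rw [ballOfSet, Finset.mem_filter] at hu
  have hne : {t : ℕ | ∃ j ∈ SOf Hterm a, hamDist Hterm u j = t}.Nonempty := by
    obtain ⟨j0, hj0, -⟩ := h 0
    exact ⟨hamDist Hterm u j0, j0, by
      rw [SOf, Finset.mem_biUnion]; exact ⟨0, Finset.mem_univ _, hj0⟩, rfl⟩
  obtain ⟨j, hjS, hjd⟩ := Nat.sInf_mem hne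
  have hdle : hamDist Hterm u j ≤ r + 1 := by
    rw [hjd]; exact hu.2
  obtain ⟨w1, hw1⟩ := aux_SOf_walk Hterm i a h hjS
  by_cases hreach : (interGraph Hterm).Reachable j u
  · obtain ⟨w2, hw2⟩ := hreach.exists_walk_length_eq_dist
    have : hamDist Hterm i u ≤ (w1.append w2).length :=
      SimpleGraph.dist_le _
    rw [SimpleGraph.Walk.length_append, hw2] at this
    have hju : (interGraph Hterm).dist j u ≤ r + 1 := by
      rw [SimpleGraph.dist_comm]; exact hdle
    omega
  · have : ¬ (interGraph Hterm).Reachable i u := by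
      intro hiu
      exact hreach ((SimpleGraph.Walk.reachable w1).symm.trans hiu)
    have h0 : hamDist Hterm i u = 0 := SimpleGraph.dist_eq_zero_of_not_reachable this
    omega


lemma aux_card_contains {d : ℕ}
    (hdeg : ∀ a, (Finset.univ.filter fun b =>
        (supp (Hterm b) ∩ supp (Hterm a)).Nonempty).card ≤ d) (i : Fin n) :
    (Finset.univ.filter fun b : Fin m => i ∈ supp (Hterm b)).card ≤ d := by
  rcases (Finset.univ.filter fun b : Fin m => i ∈ supp (Hterm b)).eq_empty_or_nonempty with
    h | ⟨b0, hb0⟩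
  · simp [h]
  · rw [Finset.mem_filter] at hb0
    refine le_trans (Finset.card_le_card ?_) (hdeg b0)
    intro b hb
    rw [Finset.mem_filter] at hb ⊢
    exact ⟨hb.1, ⟨i, Finset.mem_inter.2 ⟨hb.2, hb0.2⟩⟩⟩

lemma aux_card_touch {d : ℕ}
    (hdeg : ∀ a, (Finset.univ.filter fun b =>
        (supp (Hterm b) ∩ supp (Hterm a)).Nonempty).card ≤ d)
    (i : Fin n) {s : ℕ} (p : Fin s → Fin m) :
    (Finset.univ.filter fun b : Fin m => ∃ j ∈ supp (Hterm b),
        j ∈ ({i} : Finset (Fin n)) ∨ ∃ ℓ : Fin s, j ∈ supp (Hterm (p ℓ))).card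
      ≤ (s + 1) * d := by
  have hsub : (Finset.univ.filter fun b : Fin m => ∃ j ∈ supp (Hterm b),
        j ∈ ({i} : Finset (Fin n)) ∨ ∃ ℓ : Fin s, j ∈ supp (Hterm (p ℓ)))
      ⊆ (Finset.univ.filter fun b : Fin m => i ∈ supp (Hterm b)) ∪
        Finset.univ.biUnion (fun ℓ : Fin s => Finset.univ.filter fun b =>
          (supp (Hterm b) ∩ supp (Hterm (p ℓ))).Nonempty) := by
    intro b hb
    rw [Finset.mem_filter] at hb
    obtain ⟨-, j, hj, hcase⟩ := hb
    rcases hcase with hji | ⟨ℓ, hℓ⟩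
    · have : j = i := by simpa using hji
      subst this
      exact Finset.mem_union_left _ (Finset.mem_filter.2 ⟨Finset.mem_univ _, hj⟩)
    · refine Finset.mem_union_right _ (Finset.mem_biUnion.2 ⟨ℓ, Finset.mem_univ _, ?_⟩)
      exact Finset.mem_filter.2 ⟨Finset.mem_univ _, ⟨j, Finset.mem_inter.2 ⟨hj, hℓ⟩⟩⟩
  refine le_trans (Finset.card_le_card hsub) (le_trans (Finset.card_union_le _ _) ?_)
  have h1 : (Finset.univ.filter fun b : Fin m => i ∈ supp (Hterm b)).card ≤ d :=
    aux_card_contains Hterm hdeg i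
  have h2 : (Finset.univ.biUnion (fun ℓ : Fin s => Finset.univ.filter fun b =>
      (supp (Hterm b) ∩ supp (Hterm (p ℓ))).Nonempty)).card ≤ s * d := by
    refine le_trans Finset.card_biUnion_le ?_
    refine le_trans (Finset.sum_le_sum (fun ℓ _ => hdeg (p ℓ))) ?_
    simp [Finset.sum_const, Finset.card_univ]
  have : (s + 1) * d = d + s * d := by ring
  omega

lemma aux_cluster_card {d : ℕ}
    (hdeg : ∀ a, (Finset.univ.filter fun b =>
        (supp (Hterm b) ∩ supp (Hterm a)).Nonempty).card ≤ d)
    (i : Fin n) :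
    ∀ s : ℕ, (Finset.univ.filter fun a : Fin (s + 1) → Fin m =>
        IsClusterFrom Hterm {i} a).card ≤ (s + 1).factorial * d ^ (s + 1) := by
  intro s
  induction s with
  | zero =>
    have hsub : (Finset.univ.filter fun a : Fin 1 → Fin m => IsClusterFrom Hterm {i} a)
        ⊆ (Finset.univ.filter fun b : Fin m => i ∈ supp (Hterm b)).image
            (fun b => fun _ : Fin 1 => b) := by
      intro a ha
      rw [Finset.mem_filter] at ha
      obtain ⟨j, hj, hcase⟩ := ha.2 0
      rcases hcase with hji | ⟨p, hp, -⟩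
      · have hji' : j = i := by simpa using hji
        subst hji'
        refine Finset.mem_image.2 ⟨a 0, Finset.mem_filter.2 ⟨Finset.mem_univ _, hj⟩, ?_⟩
        funext q
        have hq : q = 0 := Subsingleton.elim _ _
        rw [hq]
      · exfalso
        have := hp
        simp [Fin.lt_def, Fin.val_eq_zero] at this
    refine le_trans (Finset.card_le_card hsub) ?_
    refine le_trans Finset.card_image_le ?_
    simpa [Nat.factorial] using aux_card_contains Hterm hdeg i
  | succ s ih =>
    have hsub : (Finset.univ.filter fun a : Fin (s + 2) → Fin m => IsClusterFrom Hterm {i} a)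
        ⊆ (Finset.univ.filter fun p : Fin (s + 1) → Fin m =>
            IsClusterFrom Hterm {i} p).biUnion (fun p =>
              (Finset.univ.filter fun b : Fin m => ∃ j ∈ supp (Hterm b),
                j ∈ ({i} : Finset (Fin n)) ∨ ∃ ℓ : Fin (s + 1),
                  j ∈ supp (Hterm (p ℓ))).image
                    (fun b => (Fin.snoc p b : Fin (s + 2) → Fin m))) := by
      intro a ha
      rw [Finset.mem_filter] at ha
      have hclp : IsClusterFrom Hterm {i} (Fin.init a) := by
        intro ℓ
        obtain ⟨j, hj, hcase⟩ := ha.2 ℓ.castSucc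
        rcases hcase with h1 | ⟨q, hq, hjq⟩
        · exact ⟨j, hj, Or.inl h1⟩
        · have hqval : (q : ℕ) < s + 1 := by
            have h1 : (q : ℕ) < (ℓ.castSucc : ℕ) := hq
            have h2 : (ℓ.castSucc : ℕ) = (ℓ : ℕ) := rfl
            have := ℓ.isLt
            omega
          refine ⟨j, hj, Or.inr ⟨⟨(q : ℕ), hqval⟩, ?_, ?_⟩⟩
          · have h1 : (q : ℕ) < (ℓ.castSucc : ℕ) := hq
            exact h1
          · have hpq : Fin.init a ⟨(q : ℕ), hqval⟩ = a q := by
              show a (Fin.castSucc ⟨(q : ℕ), hqval⟩) = a q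
              congr 1
            rw [hpq]
            exact hjq
      have hb : a (Fin.last (s + 1)) ∈ Finset.univ.filter fun b : Fin m =>
          ∃ j ∈ supp (Hterm b), j ∈ ({i} : Finset (Fin n)) ∨ ∃ ℓ : Fin (s + 1),
            j ∈ supp (Hterm (Fin.init a ℓ)) := by
        obtain ⟨j, hj, hcase⟩ := ha.2 (Fin.last (s + 1))
        refine Finset.mem_filter.2 ⟨Finset.mem_univ _, j, hj, ?_⟩
        rcases hcase with h1 | ⟨q, hq, hjq⟩
        · exact Or.inl h1
        · have hqval : (q : ℕ) < s + 1 := hq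
          refine Or.inr ⟨⟨(q : ℕ), hqval⟩, ?_⟩
          have hpq : Fin.init a ⟨(q : ℕ), hqval⟩ = a q := by
            show a (Fin.castSucc ⟨(q : ℕ), hqval⟩) = a q
            congr 1
          rw [hpq]
          exact hjq
      refine Finset.mem_biUnion.2 ⟨Fin.init a,
        Finset.mem_filter.2 ⟨Finset.mem_univ _, hclp⟩, ?_⟩
      exact Finset.mem_image.2 ⟨a (Fin.last (s + 1)), hb, Fin.snoc_init_self a⟩
    refine le_trans (Finset.card_le_card hsub) (le_trans Finset.card_biUnion_le ?_)
    have hstep : ∀ p ∈ (Finset.univ.filter fun p : Fin (s + 1) → Fin m =>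
        IsClusterFrom Hterm {i} p),
        ((Finset.univ.filter fun b : Fin m => ∃ j ∈ supp (Hterm b),
          j ∈ ({i} : Finset (Fin n)) ∨ ∃ ℓ : Fin (s + 1),
            j ∈ supp (Hterm (p ℓ))).image
              (fun b => (Fin.snoc p b : Fin (s + 2) → Fin m))).card
          ≤ (s + 2) * d := by
      intro p _
      exact le_trans Finset.card_image_le (aux_card_touch Hterm hdeg i p)
    refine le_trans (Finset.sum_le_sum hstep) ?_
    rw [Finset.sum_const, smul_eq_mul]
    calc (Finset.univ.filter fun p : Fin (s + 1) → Fin m =>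
          IsClusterFrom Hterm {i} p).card * ((s + 2) * d)
        ≤ ((s + 1).factorial * d ^ (s + 1)) * ((s + 2) * d) :=
          Nat.mul_le_mul_right _ ih
      _ = (s + 2).factorial * d ^ (s + 2) := by
          rw [Nat.factorial_succ (s + 1), pow_succ]
          ring


end AuxLemmas

/-- **Quasi-locality of the update matrices**: for unit-`ℓ₁` nonnegative vectors `x, y`
supported on `X, Y`, the bilinear form of `Q̂⁽ⁱ⁾` decays geometrically in
`max(dist(i,X), dist(i,Y))`. -/

theorem quasi_locality_of_update_matrices
    (n m : ℕ) (Hterm : Fin m → QMat n)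
    (hherm : ∀ a, (Hterm a).IsHermitian)
    (hopnorm : ∀ a, opNorm (Hterm a) ≤ 1)
    (k d : ℕ) (g : ℝ)
    (hloc : ∀ a, (supp (Hterm a)).card ≤ k)
    (hd2 : 2 ≤ d)
    (hdeg : ∀ a, (Finset.univ.filter fun b =>
        (supp (Hterm b) ∩ supp (Hterm a)).Nonempty).card ≤ d)
    (hg1 : 1 ≤ g)
    (hgrow : ∀ (i : Fin n) (r : ℕ), ((ballH Hterm i r).card : ℝ) ≤ g ^ r)
    (β : ℝ) (hβ0 : 0 < β)
    (hβ : β ≤ 1 / (100 * g * (k : ℝ) * ((d : ℝ) + 1)))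
    (x y : Fin n → ℝ) (X Y : Finset (Fin n))
    (hxnn : ∀ j, 0 ≤ x j) (hynn : ∀ j, 0 ≤ y j)
    (hxsupp : ∀ j ∉ X, x j = 0) (hysupp : ∀ j ∉ Y, y j = 0)
    (hx1 : ∑ j, |x j| = 1) (hy1 : ∑ j, |y j| = 1)
    (i : Fin n) :
    dotProduct y ((Qhat Hterm k d β i).mulVec x)
      ≤ 150 * (k : ℝ) * (25 * g * (k : ℝ) * ((d : ℝ) + 1) * β) ^
          (max 1 (max (distToSet Hterm i X) (distToSet Hterm i Y) - 1)) := by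
  classical
  -- basic positivity and size facts
  have hg0 : (0:ℝ) < g := lt_of_lt_of_le one_pos hg1
  have hk0 : k ≠ 0 := by
    intro h
    subst h
    simp only [Nat.cast_zero, mul_zero, zero_mul] at hβ
    rw [one_div, inv_zero] at hβ
    linarith
  have hk1 : (1:ℝ) ≤ (k:ℝ) := by
    have : 1 ≤ k := Nat.one_le_iff_ne_zero.2 hk0
    exact_mod_cast this
  have hd1 : (1:ℝ) ≤ (d:ℝ) := by
    have : (1:ℕ) ≤ d := by omega
    exact_mod_cast this
  set α : ℝ := g * (k:ℝ) * ((d:ℝ) + 1) * β with hα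
  have hα0 : 0 < α := by positivity
  have hα100 : α ≤ 1 / 100 := by
    have hpos : (0:ℝ) < 100 * g * (k:ℝ) * ((d:ℝ) + 1) := by positivity
    calc α = g * (k:ℝ) * ((d:ℝ) + 1) * β := hα
      _ ≤ g * (k:ℝ) * ((d:ℝ) + 1) * (1 / (100 * g * (k:ℝ) * ((d:ℝ) + 1))) := by
          apply mul_le_mul_of_nonneg_left hβ
          positivity
      _ = 1 / 100 := by field_simp
  have h5α0 : (0:ℝ) ≤ 5 * α := by positivity
  have h5α1 : 5 * α ≤ 1 := by linarith
  have hgk1 : (1:ℝ) ≤ g * (k:ℝ) := by nlinarith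
  have hβd : β * (d:ℝ) ≤ α := by
    rw [hα]
    nlinarith
  have hρα : ((d:ℝ) + 1) * (k:ℝ) * β ≤ α := by
    rw [hα]
    nlinarith
  -- the matrix family
  set c : ℕ → ℕ → ℝ := fun s r =>
    22 * (k:ℝ) * (β ^ (s + 1) / (Nat.factorial s : ℝ)) * (((d:ℝ) + 1) * (k:ℝ) * β) ^ r
    with hc
  set F : ℕ → ℕ → Matrix (Fin n) (Fin n) ℝ := fun s r =>
    ∑ a : Fin (s + 1) → Fin m,
      (if IsClusterFrom Hterm {i} a then c s r else 0) •
        ESet (ballOfSet Hterm (SOf Hterm a) (r + 1)) with hF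
  have hQeq : Qhat Hterm k d β i = ∑' s : ℕ, ∑' r : ℕ, F s r := rfl
  have hc0 : ∀ s r, 0 ≤ c s r := by
    intro s r
    rw [hc]
    positivity
  -- entrywise formula
  have hFapply : ∀ s r u v, F s r u v =
      ∑ a : Fin (s + 1) → Fin m,
        (if IsClusterFrom Hterm {i} a then c s r else 0) *
          (if u ∈ ballOfSet Hterm (SOf Hterm a) (r + 1) ∧
              v ∈ ballOfSet Hterm (SOf Hterm a) (r + 1) then (1:ℝ) else 0) := by
    intro s r u v
    rw [hF]
    simp only [Finset.sum_apply, Matrix.sum_apply, Matrix.smul_apply, ESet, smul_eq_mul]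
  have hF0 : ∀ s r u v, 0 ≤ F s r u v := by
    intro s r u v
    rw [hFapply]
    apply Finset.sum_nonneg
    intro a _
    have := hc0 s r
    split_ifs <;> simp <;> linarith
  -- exponent function
  set eC : Fin n → Fin n → ℕ := fun u v =>
    max 1 (max (hamDist Hterm i u) (hamDist Hterm i v) - 1) with heC
  -- key entrywise bound
  have hFle : ∀ s r u v, F s r u v ≤
      22 * (k:ℝ) * (5 * α) ^ (eC u v) * (2/5) ^ (s + 1) * (2/5) ^ r := by
    intro s r u v
    by_cases hcond : eC u v ≤ s + 1 + r
    · -- use the cluster count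
      have step1 : F s r u v ≤
          ∑ a : Fin (s + 1) → Fin m,
            (if IsClusterFrom Hterm {i} a then c s r else 0) := by
        rw [hFapply]
        apply Finset.sum_le_sum
        intro a _
        have := hc0 s r
        split_ifs <;> simp <;> linarith
      have step2 : (∑ a : Fin (s + 1) → Fin m,
            (if IsClusterFrom Hterm {i} a then c s r else 0))
          = ((Finset.univ.filter fun a : Fin (s + 1) → Fin m =>
              IsClusterFrom Hterm {i} a).card : ℝ) * c s r := by
        rw [← Finset.sum_filter, Finset.sum_const, nsmul_eq_mul]
      have step3 : ((Finset.univ.filter fun a : Fin (s + 1) → Fin m =>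
              IsClusterFrom Hterm {i} a).card : ℝ) * c s r
          ≤ (((s + 1).factorial * d ^ (s + 1) : ℕ) : ℝ) * c s r := by
        apply mul_le_mul_of_nonneg_right _ (hc0 s r)
        exact_mod_cast aux_cluster_card Hterm hdeg i s
      have hsfac : ((s.factorial : ℝ)) ≠ 0 := by
        exact_mod_cast (Nat.factorial_ne_zero s)
      have step4 : (((s + 1).factorial * d ^ (s + 1) : ℕ) : ℝ) * c s r
          = 22 * (k:ℝ) * (((s:ℝ) + 1) * (β * (d:ℝ)) ^ (s + 1) *
              (((d:ℝ) + 1) * (k:ℝ) * β) ^ r) := by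
        rw [hc]
        push_cast [Nat.factorial_succ]
        rw [mul_pow]
        field_simp
        ring
      have h1 : ((s:ℝ) + 1) * (β * (d:ℝ)) ^ (s + 1) ≤ (2 * α) ^ (s + 1) := by
        have ha : ((s:ℝ) + 1) ≤ 2 ^ (s + 1) := by
          have := (Nat.lt_two_pow_self (n := s + 1)).le
          exact_mod_cast this
        have hb : (β * (d:ℝ)) ^ (s + 1) ≤ α ^ (s + 1) :=
          pow_le_pow_left₀ (by positivity) hβd _
        calc ((s:ℝ) + 1) * (β * (d:ℝ)) ^ (s + 1)
            ≤ 2 ^ (s + 1) * α ^ (s + 1) := by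
              apply mul_le_mul ha hb (by positivity) (by positivity)
          _ = (2 * α) ^ (s + 1) := (mul_pow _ _ _).symm
      have h2 : (((d:ℝ) + 1) * (k:ℝ) * β) ^ r ≤ (2 * α) ^ r := by
        apply pow_le_pow_left₀ (by positivity)
        linarith
      have h4 : (2 * α) ^ (s + 1 + r) = (5 * α) ^ (s + 1 + r) * (2/5 : ℝ) ^ (s + 1 + r) := by
        rw [← mul_pow, show (5 * α) * ((2:ℝ)/5) = 2 * α by ring]
      have h5 : (5 * α) ^ (s + 1 + r) ≤ (5 * α) ^ (eC u v) :=
        pow_le_pow_of_le_one h5α0 h5α1 hcond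
      have key : ((s:ℝ) + 1) * (β * (d:ℝ)) ^ (s + 1) * (((d:ℝ) + 1) * (k:ℝ) * β) ^ r
          ≤ (5 * α) ^ (eC u v) * (2/5) ^ (s + 1) * (2/5) ^ r := by
        calc ((s:ℝ) + 1) * (β * (d:ℝ)) ^ (s + 1) * (((d:ℝ) + 1) * (k:ℝ) * β) ^ r
            ≤ (2 * α) ^ (s + 1) * (2 * α) ^ r := by
              apply mul_le_mul h1 h2 (by positivity) (by positivity)
          _ = (5 * α) ^ (s + 1 + r) * (2/5 : ℝ) ^ (s + 1 + r) := by
              rw [← pow_add, h4]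
          _ ≤ (5 * α) ^ (eC u v) * (2/5 : ℝ) ^ (s + 1 + r) := by
              apply mul_le_mul_of_nonneg_right h5 (by positivity)
          _ = (5 * α) ^ (eC u v) * (2/5) ^ (s + 1) * (2/5) ^ r := by
              rw [pow_add, mul_assoc]
      calc F s r u v ≤ (((s + 1).factorial * d ^ (s + 1) : ℕ) : ℝ) * c s r :=
            le_trans step1 (le_of_eq step2) |>.trans step3
        _ = 22 * (k:ℝ) * (((s:ℝ) + 1) * (β * (d:ℝ)) ^ (s + 1) *
              (((d:ℝ) + 1) * (k:ℝ) * β) ^ r) := step4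
        _ ≤ 22 * (k:ℝ) * ((5 * α) ^ (eC u v) * (2/5) ^ (s + 1) * (2/5) ^ r) := by
              apply mul_le_mul_of_nonneg_left key (by positivity)
        _ = 22 * (k:ℝ) * (5 * α) ^ (eC u v) * (2/5) ^ (s + 1) * (2/5) ^ r := by ring
    · -- geometry: the entry vanishes
      have hz : F s r u v = 0 := by
        rw [hFapply]
        apply Finset.sum_eq_zero
        intro a _
        split_ifs with hcl hmem
        · exfalso
          have hu := aux_cluster_dist Hterm i a hcl hmem.1
          have hv := aux_cluster_dist Hterm i a hcl hmem.2
          have hM : max (hamDist Hterm i u) (hamDist Hterm i v) ≤ s + r + 2 :=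
            max_le hu hv
          have hE : eC u v ≤ max 1 (s + r + 2 - 1) := by
            rw [heC]
            exact max_le_max le_rfl (Nat.sub_le_sub_right hM 1)
          have hle : max 1 (s + r + 2 - 1) ≤ s + r + 1 := by
            apply max_le
            · omega
            · omega
          omega
        all_goals simp
      rw [hz]
      positivity
  -- geometric series facts
  have hgeo : Summable (fun r : ℕ => ((2:ℝ)/5) ^ r) :=
    summable_geometric_of_lt_one (by norm_num) (by norm_num)
  have hgeosum : ∑' r : ℕ, ((2:ℝ)/5) ^ r = 5/3 := by
    rw [tsum_geometric_of_lt_one (by norm_num) (by norm_num)]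
    norm_num
  -- summability in r
  have hsum_entry_r : ∀ s u v, Summable (fun r => F s r u v) := by
    intro s u v
    apply Summable.of_nonneg_of_le (fun r => hF0 s r u v) (fun r => hFle s r u v)
    exact hgeo.mul_left _
  have hsum_r : ∀ s, Summable (fun r => F s r) := by
    intro s
    apply Pi.summable.2
    intro u
    apply Pi.summable.2
    intro v
    exact hsum_entry_r s u v
  have hg_apply : ∀ s u v, (∑' r : ℕ, F s r) u v = ∑' r : ℕ, F s r u v := by
    intro s u v
    exact (congrFun (tsum_apply (hsum_r s)) v).trans (tsum_apply (Pi.summable.1 (hsum_r s) u))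
  have hg_nonneg : ∀ s u v, 0 ≤ (∑' r : ℕ, F s r) u v := by
    intro s u v
    rw [hg_apply]
    exact tsum_nonneg (fun r => hF0 s r u v)
  have hg_le : ∀ s u v, (∑' r : ℕ, F s r) u v ≤
      22 * (k:ℝ) * (5 * α) ^ (eC u v) * (2/5) ^ (s + 1) * (5/3) := by
    intro s u v
    rw [hg_apply]
    calc (∑' r : ℕ, F s r u v)
        ≤ ∑' r : ℕ, 22 * (k:ℝ) * (5 * α) ^ (eC u v) * (2/5) ^ (s + 1) * (2/5) ^ r :=
          Summable.tsum_le_tsum (fun r => hFle s r u v) (hsum_entry_r s u v) (hgeo.mul_left _)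
      _ = 22 * (k:ℝ) * (5 * α) ^ (eC u v) * (2/5) ^ (s + 1) * (5/3) := by
          rw [tsum_mul_left, hgeosum]
  -- summability in s
  have hbound_s : ∀ u v, Summable (fun s : ℕ =>
      22 * (k:ℝ) * (5 * α) ^ (eC u v) * (2/5) ^ (s + 1) * (5/3)) := by
    intro u v
    have : (fun s : ℕ => 22 * (k:ℝ) * (5 * α) ^ (eC u v) * (2/5) ^ (s + 1) * (5/3))
        = fun s : ℕ => (22 * (k:ℝ) * (5 * α) ^ (eC u v) * (2/5) * (5/3)) * (2/5) ^ s := by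
      funext s
      rw [pow_succ]
      ring
    rw [this]
    exact hgeo.mul_left _
  have hsum_entry_s : ∀ u v, Summable (fun s : ℕ => (∑' r : ℕ, F s r) u v) := by
    intro u v
    exact Summable.of_nonneg_of_le (fun s => hg_nonneg s u v) (fun s => hg_le s u v)
      (hbound_s u v)
  have hsum_s : Summable (fun s : ℕ => ∑' r : ℕ, F s r) := by
    apply Pi.summable.2
    intro u
    apply Pi.summable.2
    intro v
    exact hsum_entry_s u v
  have hQapply : ∀ u v, Qhat Hterm k d β i u v = ∑' s : ℕ, (∑' r : ℕ, F s r) u v := by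
    intro u v
    rw [hQeq]
    exact (congrFun (tsum_apply hsum_s) v).trans (tsum_apply (Pi.summable.1 hsum_s u))
  have hQnonneg : ∀ u v, 0 ≤ Qhat Hterm k d β i u v := by
    intro u v
    rw [hQapply]
    exact tsum_nonneg (fun s => hg_nonneg s u v)
  have hQle : ∀ u v, Qhat Hterm k d β i u v ≤ 25 * (k:ℝ) * (5 * α) ^ (eC u v) := by
    intro u v
    rw [hQapply]
    have step : (∑' s : ℕ, (∑' r : ℕ, F s r) u v)
        ≤ ∑' s : ℕ, 22 * (k:ℝ) * (5 * α) ^ (eC u v) * (2/5) ^ (s + 1) * (5/3) :=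
      Summable.tsum_le_tsum (fun s => hg_le s u v) (hsum_entry_s u v) (hbound_s u v)
    have hval : (∑' s : ℕ, 22 * (k:ℝ) * (5 * α) ^ (eC u v) * (2/5) ^ (s + 1) * (5/3))
        = 22 * (k:ℝ) * (5 * α) ^ (eC u v) * (2/3) * (5/3) := by
      have : (fun s : ℕ => 22 * (k:ℝ) * (5 * α) ^ (eC u v) * (2/5) ^ (s + 1) * (5/3))
          = fun s : ℕ => (22 * (k:ℝ) * (5 * α) ^ (eC u v) * (2/5) * (5/3)) * (2/5) ^ s := by
        funext s
        rw [pow_succ]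
        ring
      rw [this, tsum_mul_left, hgeosum]
      ring
    rw [hval] at step
    have hpow : (0:ℝ) ≤ (k:ℝ) * (5 * α) ^ (eC u v) := by positivity
    nlinarith [hpow]
  -- the target exponent
  set E : ℕ := max 1 (max (distToSet Hterm i X) (distToSet Hterm i Y) - 1) with hE
  set R : ℝ := 150 * (k:ℝ) * (25 * α) ^ E with hR
  have hR0 : 0 ≤ R := by rw [hR]; positivity
  -- entrywise comparison with suitable supports
  have hterm : ∀ u v, y u * (Qhat Hterm k d β i u v * x v) ≤ y u * x v * R := by
    intro u v
    by_cases hyu : y u = 0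
    · rw [hyu]
      simp
    by_cases hxv : x v = 0
    · rw [hxv]
      simp
    have huY : u ∈ Y := by
      by_contra h
      exact hyu (hysupp u h)
    have hvX : v ∈ X := by
      by_contra h
      exact hxv (hxsupp v h)
    have hdX : distToSet Hterm i X ≤ hamDist Hterm i v :=
      Nat.sInf_le ⟨v, hvX, rfl⟩
    have hdY : distToSet Hterm i Y ≤ hamDist Hterm i u :=
      Nat.sInf_le ⟨u, huY, rfl⟩
    have hEe : E ≤ eC u v := by
      have hmax : max (distToSet Hterm i X) (distToSet Hterm i Y)
          ≤ max (hamDist Hterm i u) (hamDist Hterm i v) := by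
        apply max_le
        · exact le_trans hdX (le_max_right _ _)
        · exact le_trans hdY (le_max_left _ _)
      rw [hE, heC]
      exact max_le_max le_rfl (Nat.sub_le_sub_right hmax 1)
    have hQb : Qhat Hterm k d β i u v ≤ R := by
      calc Qhat Hterm k d β i u v ≤ 25 * (k:ℝ) * (5 * α) ^ (eC u v) := hQle u v
        _ ≤ 25 * (k:ℝ) * (5 * α) ^ E := by
            apply mul_le_mul_of_nonneg_left (pow_le_pow_of_le_one h5α0 h5α1 hEe)
            positivity
        _ ≤ 150 * (k:ℝ) * (25 * α) ^ E := by
            have h1 : (5 * α) ^ E ≤ (25 * α) ^ E :=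
              pow_le_pow_left₀ h5α0 (by linarith) E
            have h2 : (0:ℝ) ≤ (25 * α) ^ E := by positivity
            nlinarith [pow_nonneg h5α0 E]
        _ = R := hR.symm
    have hx0 : 0 ≤ x v := hxnn v
    have hy0 : 0 ≤ y u := hynn u
    have h1 : Qhat Hterm k d β i u v * x v ≤ R * x v :=
      mul_le_mul_of_nonneg_right hQb hx0
    calc y u * (Qhat Hterm k d β i u v * x v) ≤ y u * (R * x v) :=
          mul_le_mul_of_nonneg_left h1 hy0
      _ = y u * x v * R := by ring
  -- assemble
  have hxsum : ∑ j, x j = 1 := by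
    rw [← hx1]
    apply Finset.sum_congr rfl
    intro j _
    rw [abs_of_nonneg (hxnn j)]
  have hysum : ∑ j, y j = 1 := by
    rw [← hy1]
    apply Finset.sum_congr rfl
    intro j _
    rw [abs_of_nonneg (hynn j)]
  have hmain : dotProduct y ((Qhat Hterm k d β i).mulVec x) ≤ R := by
    calc dotProduct y ((Qhat Hterm k d β i).mulVec x)
        = ∑ u, ∑ v, y u * (Qhat Hterm k d β i u v * x v) := by
          simp only [dotProduct, Matrix.mulVec, Finset.mul_sum]
      _ ≤ ∑ u, ∑ v, y u * x v * R := by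
          apply Finset.sum_le_sum
          intro u _
          apply Finset.sum_le_sum
          intro v _
          exact hterm u v
      _ = ∑ u, y u * ((∑ v, x v) * R) := by
          apply Finset.sum_congr rfl
          intro u _
          rw [← Finset.sum_mul, ← Finset.mul_sum, mul_assoc]
      _ = (∑ u, y u) * ((∑ v, x v) * R) := by rw [← Finset.sum_mul]
      _ = R := by rw [hxsum, hysum]; ring
  have hfinal : R = 150 * (k:ℝ) * (25 * g * (k:ℝ) * ((d:ℝ) + 1) * β) ^
      (max 1 (max (distToSet Hterm i X) (distToSet Hterm i Y) - 1)) := by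
    rw [hR, hE, hα]
    ring_nf
  rw [← hfinal]
  exact hmain

end
end

section
/- Convergence of a sum over paths: Let dist be a metric on [n] with polynomial growth parameter ν ≥ 1, i.e. |{j : dist(i,j) ≤ r}| ≤ (1+r)^ν for all i ∈ [n] and r ≥ 0. Then for every constant c ∈ (0,1), every ℓ ≥ 1, and all i_0, i_ℓ ∈ [n]: Σ_{i_1,…,i_{ℓ−1} ∈ [n]} c^{dist(i_ℓ,i_{ℓ−1}) + … + dist(i_1,i_0)} ≤ λ^{ℓ−1}·Σ_{j ≥ dist(i_ℓ,i_0)} (1+j)^ν·(√c)^j, where λ = (Σ_{x≥0}(1+x)^ν·(√c)^x)². In particular, for c < e^{−2ν}/1000, this sum is at most 1.1^ℓ·(e^ν·√c)^{dist(i_ℓ,i_0)} ≤ 1.1^ℓ/25^{dist(i_ℓ,i_0)}. -/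
open Classical

noncomputable section

lemma path_tri {n : ℕ} (d : Fin n → Fin n → ℕ)
    (hrefl : ∀ i, d i i = 0)
    (htri : ∀ i j l, d i l ≤ d i j + d j l) :
    ∀ (ℓ : ℕ) (f : Fin (ℓ+1) → Fin n),
      d (f (Fin.last ℓ)) (f 0) ≤ ∑ t : Fin ℓ, d (f t.succ) (f t.castSucc) := by
  intro ℓ
  induction ℓ with
  | zero => intro f; simp [hrefl]
  | succ ℓ ih =>
    intro f
    have h1 : d (f (Fin.last (ℓ+1))) (f 0) ≤ d (f (Fin.last (ℓ+1))) (f 1) + d (f 1) (f 0) :=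
      htri _ _ _
    have h2 := ih (fun i => f i.succ)
    simp only [Fin.succ_last, Fin.succ_zero_eq_one] at h2
    rw [Fin.sum_univ_succ]
    simp only [Fin.succ_zero_eq_one, Fin.castSucc_zero]
    have h3 : ∀ t : Fin ℓ, d (f t.succ.succ) (f t.succ.castSucc)
        = d (f t.succ.succ) (f t.castSucc.succ) := by
      intro t; rw [Fin.succ_castSucc]
    calc d (f (Fin.last (ℓ+1))) (f 0) ≤ d (f (Fin.last (ℓ+1))) (f 1) + d (f 1) (f 0) := h1
      _ ≤ (∑ t : Fin ℓ, d (f t.succ.succ) (f t.castSucc.succ)) + d (f 1) (f 0) := by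
          exact add_le_add_left h2 _
      _ = d (f 1) (f 0) + ∑ t : Fin ℓ, d (f t.succ.succ) (f t.succ.castSucc) := by
          rw [add_comm]
          simp only [Fin.succ_castSucc]

lemma S_le {n : ℕ} (d : Fin n → Fin n → ℕ) (s : ℝ) (hs0 : 0 ≤ s) (hs1 : s ≤ 1)
    (μ : ℝ) (hμ : 1 ≤ μ) (hstep : ∀ i : Fin n, (∑ j : Fin n, s ^ d j i) ≤ μ) :
    ∀ (ℓ : ℕ) (i0 il : Fin n),
      (∑ f : Fin (ℓ+1+1) → Fin n,
        if f 0 = i0 ∧ f (Fin.last (ℓ+1)) = il then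
          s ^ (∑ t : Fin (ℓ+1), d (f t.succ) (f t.castSucc)) else 0) ≤ μ ^ ℓ := by
  intro ℓ
  induction ℓ with
  | zero =>
    intro i0 il
    calc (∑ f : Fin 2 → Fin n,
        if f 0 = i0 ∧ f (Fin.last 1) = il then
          s ^ (∑ t : Fin 1, d (f t.succ) (f t.castSucc)) else 0)
        ≤ ∑ f : Fin 2 → Fin n, (if f 0 = i0 ∧ f (Fin.last 1) = il then (1:ℝ) else 0) := by
          apply Finset.sum_le_sum
          intro f _
          by_cases h : f 0 = i0 ∧ f (Fin.last 1) = il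
          · simp only [h, if_true]
            exact pow_le_one₀ hs0 hs1
          · simp only [h, if_false, le_refl]
      _ = ((Finset.univ.filter fun f : Fin 2 → Fin n => f 0 = i0 ∧ f (Fin.last 1) = il).card : ℝ) := by
          rw [Finset.sum_ite, Finset.sum_const, Finset.sum_const]; simp
      _ ≤ 1 := by
          norm_cast
          apply Finset.card_le_one.mpr
          intro f hf g hg
          simp only [Finset.mem_filter] at hf hg
          funext i
          fin_cases i
          · show f 0 = g 0
            rw [hf.2.1, hg.2.1]
          · show f (Fin.last 1) = g (Fin.last 1)
            rw [hf.2.2, hg.2.2]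
      _ = μ ^ 0 := by simp
  | succ ℓ ih =>
    intro i0 il
    set F : (Fin (ℓ+1+1+1) → Fin n) → ℝ := fun f =>
      if f 0 = i0 ∧ f (Fin.last (ℓ+1+1)) = il then
        s ^ (∑ t : Fin (ℓ+1+1), d (f t.succ) (f t.castSucc)) else 0 with hF
    have e := Fin.consEquiv (fun _ : Fin (ℓ+1+1+1) => Fin n)
    have hre : (∑ f : Fin (ℓ+1+1+1) → Fin n, F f)
        = ∑ p : Fin n × (Fin (ℓ+1+1) → Fin n), F (Fin.cons p.1 p.2) :=
      (Equiv.sum_comp (Fin.consEquiv (fun _ : Fin (ℓ+1+1+1) => Fin n)) F).symm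
    have hcons : ∀ (j : Fin n) (g : Fin (ℓ+1+1) → Fin n),
        F (Fin.cons j g) = if j = i0 ∧ g (Fin.last (ℓ+1)) = il then
          s ^ (d (g 0) j + ∑ t : Fin (ℓ+1), d (g t.succ) (g t.castSucc)) else 0 := by
      intro j g
      have h0 : (Fin.cons j g : Fin (ℓ+1+1+1) → Fin n) 0 = j := rfl
      have hlast : (Fin.cons j g : Fin (ℓ+1+1+1) → Fin n) (Fin.last (ℓ+1+1))
          = g (Fin.last (ℓ+1)) := by
        rw [← Fin.succ_last, Fin.cons_succ]
      have hsum : (∑ t : Fin (ℓ+1+1), d ((Fin.cons j g : Fin (ℓ+1+1+1) → Fin n) t.succ)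
            ((Fin.cons j g : Fin (ℓ+1+1+1) → Fin n) t.castSucc))
          = d (g 0) j + ∑ t : Fin (ℓ+1), d (g t.succ) (g t.castSucc) := by
        rw [Fin.sum_univ_succ]
        simp only [← Fin.succ_castSucc, Fin.cons_succ, Fin.castSucc_zero, Fin.cons_zero]
      rw [hF]
      simp only [h0, hlast, hsum]
    rw [hre, Fintype.sum_prod_type]
    have hcollapse : ∀ j : Fin n, (∑ g : Fin (ℓ+1+1) → Fin n, F (Fin.cons j g))
        = if j = i0 then (∑ g : Fin (ℓ+1+1) → Fin n,
            if g (Fin.last (ℓ+1)) = il then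
              s ^ (d (g 0) j + ∑ t : Fin (ℓ+1), d (g t.succ) (g t.castSucc)) else 0) else 0 := by
      intro j
      by_cases hj : j = i0
      · simp only [hj, if_true]
        refine Finset.sum_congr rfl fun g _ => ?_
        rw [hcons]
        by_cases hg : g (Fin.last (ℓ+1)) = il <;> simp [hg]
      · simp only [hj, if_false]
        refine Finset.sum_eq_zero fun g _ => ?_
        rw [hcons]
        simp [hj]
    calc (∑ j : Fin n, ∑ g : Fin (ℓ+1+1) → Fin n, F (Fin.cons j g))
        = ∑ g : Fin (ℓ+1+1) → Fin n,
            if g (Fin.last (ℓ+1)) = il then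
              s ^ (d (g 0) i0 + ∑ t : Fin (ℓ+1), d (g t.succ) (g t.castSucc)) else 0 := by
          rw [Finset.sum_congr rfl fun j _ => hcollapse j, Finset.sum_ite_eq' Finset.univ i0]
          simp
      _ = ∑ g : Fin (ℓ+1+1) → Fin n, ∑ i1 : Fin n,
            (if g 0 = i1 then (if g (Fin.last (ℓ+1)) = il then
              s ^ (d i1 i0 + ∑ t : Fin (ℓ+1), d (g t.succ) (g t.castSucc)) else 0) else 0) := by
          refine Finset.sum_congr rfl fun g _ => ?_
          rw [Finset.sum_ite_eq Finset.univ (g 0)]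
          simp
      _ = ∑ i1 : Fin n, ∑ g : Fin (ℓ+1+1) → Fin n,
            (if g 0 = i1 then (if g (Fin.last (ℓ+1)) = il then
              s ^ (d i1 i0 + ∑ t : Fin (ℓ+1), d (g t.succ) (g t.castSucc)) else 0) else 0) :=
          Finset.sum_comm
      _ = ∑ i1 : Fin n, s ^ (d i1 i0) * ∑ g : Fin (ℓ+1+1) → Fin n,
            (if g 0 = i1 ∧ g (Fin.last (ℓ+1)) = il then
              s ^ (∑ t : Fin (ℓ+1), d (g t.succ) (g t.castSucc)) else 0) := by
          refine Finset.sum_congr rfl fun i1 _ => ?_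
          rw [Finset.mul_sum]
          refine Finset.sum_congr rfl fun g _ => ?_
          by_cases h1 : g 0 = i1 <;> by_cases h2 : g (Fin.last (ℓ+1)) = il <;>
            simp [h1, h2, pow_add]
      _ ≤ ∑ i1 : Fin n, s ^ (d i1 i0) * μ ^ ℓ := by
          refine Finset.sum_le_sum fun i1 _ => ?_
          exact mul_le_mul_of_nonneg_left (ih i1 il) (pow_nonneg hs0 _)
      _ = (∑ i1 : Fin n, s ^ (d i1 i0)) * μ ^ ℓ := by rw [← Finset.sum_mul]
      _ ≤ μ * μ ^ ℓ := by
          refine mul_le_mul_of_nonneg_right (hstep i0) (pow_nonneg (le_trans zero_le_one hμ) _)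
      _ = μ ^ (ℓ+1) := (pow_succ' μ ℓ).symm

lemma summable_aux (ν : ℝ) (s : ℝ) (hs0 : 0 < s) (hs1 : s < 1) :
    Summable (fun x : ℕ => (1 + x : ℝ) ^ ν * s ^ x) := by
  set k := ⌈ν⌉₊ with hk
  have hb : Summable (fun x : ℕ => ((x : ℝ)) ^ k * s ^ x) :=
    summable_pow_mul_geometric_of_norm_lt_one k
      (by rw [Real.norm_eq_abs, abs_of_nonneg hs0.le]; exact hs1)
  have hb1 : Summable (fun x : ℕ => (((x + 1 : ℕ) : ℝ)) ^ k * s ^ (x + 1)) :=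
    (summable_nat_add_iff 1).mpr hb
  have hb2 := hb1.mul_right s⁻¹
  refine Summable.of_nonneg_of_le (fun x => ?_) (fun x => ?_) hb2
  · positivity
  · have h1 : (1 + x : ℝ) ^ ν ≤ (1 + x : ℝ) ^ (k : ℝ) :=
      Real.rpow_le_rpow_of_exponent_le (le_add_of_nonneg_right (Nat.cast_nonneg x)) (Nat.le_ceil ν)
    have h2 : (1 + x : ℝ) ^ (k : ℝ) = (((x + 1 : ℕ) : ℝ)) ^ k := by
      rw [Real.rpow_natCast]; push_cast; ring
    calc (1 + x : ℝ) ^ ν * s ^ x ≤ (((x + 1 : ℕ) : ℝ)) ^ k * s ^ x := by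
          rw [← h2]; exact mul_le_mul_of_nonneg_right h1 (by positivity)
      _ = (((x + 1 : ℕ) : ℝ)) ^ k * s ^ (x + 1) * s⁻¹ := by
          rw [mul_assoc, pow_succ, mul_assoc, mul_inv_cancel₀ (ne_of_gt hs0), mul_one]

lemma step_bound {n : ℕ} (d : Fin n → Fin n → ℕ) (ν : ℝ)
    (hgrow : ∀ (i : Fin n) (r : ℕ),
      ((Finset.univ.filter fun j => d i j ≤ r).card : ℝ) ≤ (1 + r : ℝ) ^ ν)
    (s : ℝ) (hs0 : 0 ≤ s)
    (hsum : Summable (fun x : ℕ => (1 + x : ℝ) ^ ν * s ^ x)) (i : Fin n) :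
    (∑ j : Fin n, s ^ d i j) ≤ ∑' x : ℕ, (1 + x : ℝ) ^ ν * s ^ x := by
  set B := Finset.univ.sup (d i) with hB
  have h1 : (∑ j : Fin n, s ^ d i j)
      = ∑ r ∈ Finset.range (B + 1), ∑ j ∈ Finset.univ.filter (fun j => d i j = r), s ^ d i j :=
    (Finset.sum_fiberwise_of_maps_to
      (fun j _ => Finset.mem_range.mpr (Nat.lt_succ_of_le (Finset.le_sup (Finset.mem_univ j)))) _).symm
  rw [h1]
  have h2 : ∀ r ∈ Finset.range (B + 1),
      (∑ j ∈ Finset.univ.filter (fun j => d i j = r), s ^ d i j) ≤ (1 + r : ℝ) ^ ν * s ^ r := by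
    intro r _
    have hc : ∀ j ∈ Finset.univ.filter (fun j => d i j = r), s ^ d i j = s ^ r := by
      intro j hj
      rw [Finset.mem_filter] at hj
      rw [hj.2]
    rw [Finset.sum_congr rfl hc, Finset.sum_const, nsmul_eq_mul]
    refine mul_le_mul_of_nonneg_right ?_ (by positivity)
    refine le_trans ?_ (hgrow i r)
    norm_cast
    apply Finset.card_le_card
    intro j hj
    rw [Finset.mem_filter] at hj ⊢
    exact ⟨hj.1, le_of_eq hj.2⟩
  refine le_trans (Finset.sum_le_sum h2) ?_
  exact hsum.sum_le_tsum _ (fun x _ => by positivity)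

/-- **Convergence of a sum over paths**: for an `ℕ`-valued metric with polynomial growth
parameter `ν`, the sum over intermediate points `i₁, …, i_{ℓ−1}` of
`c^{dist(i_ℓ,i_{ℓ−1}) + ⋯ + dist(i₁,i₀)}` is at most
`λ^{ℓ−1} Σ_{j ≥ dist(i_ℓ,i₀)} (1+j)^ν (√c)^j` with `λ = (Σ_{x≥0} (1+x)^ν (√c)^x)²`;
for `c < e^{−2ν}/1000` this is at most `1.1^ℓ (e^ν √c)^{dist(i_ℓ,i₀)} ≤ 1.1^ℓ/25^{dist}`. -/
theorem path_sum_convergence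
    (n : ℕ) (dist : Fin n → Fin n → ℕ)
    (hrefl : ∀ i, dist i i = 0) (hzero : ∀ i j, dist i j = 0 → i = j)
    (hsymm : ∀ i j, dist i j = dist j i)
    (htri : ∀ i j l, dist i l ≤ dist i j + dist j l)
    (ν : ℝ) (hν : 1 ≤ ν)
    (hgrow : ∀ (i : Fin n) (r : ℕ),
      ((Finset.univ.filter fun j => dist i j ≤ r).card : ℝ) ≤ (1 + r : ℝ) ^ ν)
    (c : ℝ) (hc0 : 0 < c) (hc1 : c < 1)
    (ℓ : ℕ) (hℓ : 1 ≤ ℓ) (i0 il : Fin n) :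
    (∑ p : {f : Fin (ℓ + 1) → Fin n // f 0 = i0 ∧ f (Fin.last ℓ) = il},
        c ^ (∑ t : Fin ℓ, dist ((p : Fin (ℓ + 1) → Fin n) t.succ)
          ((p : Fin (ℓ + 1) → Fin n) t.castSucc)))
      ≤ ((∑' x : ℕ, (1 + x : ℝ) ^ ν * Real.sqrt c ^ x) ^ 2) ^ (ℓ - 1) *
          ∑' j : ℕ, (if dist il i0 ≤ j then (1 + j : ℝ) ^ ν * Real.sqrt c ^ j else 0) ∧
    (c < Real.exp (-2 * ν) / 1000 →
      (∑ p : {f : Fin (ℓ + 1) → Fin n // f 0 = i0 ∧ f (Fin.last ℓ) = il},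
          c ^ (∑ t : Fin ℓ, dist ((p : Fin (ℓ + 1) → Fin n) t.succ)
            ((p : Fin (ℓ + 1) → Fin n) t.castSucc)))
        ≤ (1.1 : ℝ) ^ ℓ * (Real.exp ν * Real.sqrt c) ^ dist il i0 ∧
      (1.1 : ℝ) ^ ℓ * (Real.exp ν * Real.sqrt c) ^ dist il i0
        ≤ (1.1 : ℝ) ^ ℓ / 25 ^ dist il i0) := by
  obtain ⟨m, rfl⟩ : ∃ m, ℓ = m + 1 := ⟨ℓ - 1, (Nat.succ_pred_eq_of_pos hℓ).symm⟩
  set s := Real.sqrt c with hs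
  have hs0 : 0 < s := Real.sqrt_pos.mpr hc0
  have hs1 : s < 1 := by
    rw [hs, show (1:ℝ) = Real.sqrt 1 from (Real.sqrt_one).symm]
    exact Real.sqrt_lt_sqrt hc0.le hc1
  set f : ℕ → ℝ := fun x => (1 + x : ℝ) ^ ν * s ^ x with hf
  have hsumm : Summable f := summable_aux ν s hs0 hs1
  set μ : ℝ := ∑' x : ℕ, f x with hμ
  have hfnn : ∀ x, 0 ≤ f x := fun x => by
    rw [hf]; positivity
  have hμ1 : (1:ℝ) ≤ μ := by
    have h0 := hsumm.le_tsum 0 (fun i _ => hfnn i)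
    have : f 0 = 1 := by rw [hf]; norm_num
    rw [hμ, ← this]; exact h0
  have hstep' : ∀ i : Fin n, (∑ j : Fin n, s ^ dist j i) ≤ μ := by
    intro i
    have he : (∑ j : Fin n, s ^ dist j i) = ∑ j : Fin n, s ^ dist i j :=
      Finset.sum_congr rfl (fun j _ => by rw [hsymm])
    rw [he]
    exact step_bound dist ν hgrow s hs0.le hsumm i
  -- rewrite subtype sum as indicator sum
  set P : (Fin (m + 1 + 1) → Fin n) → Prop := fun f => f 0 = i0 ∧ f (Fin.last (m+1)) = il with hP
  set Sd : (Fin (m + 1 + 1) → Fin n) → ℕ :=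
    fun f => ∑ t : Fin (m+1), dist (f t.succ) (f t.castSucc) with hSd
  have hsub : (∑ p : {f : Fin (m + 1 + 1) → Fin n // f 0 = i0 ∧ f (Fin.last (m+1)) = il},
        c ^ (∑ t : Fin (m+1), dist ((p : Fin (m + 1 + 1) → Fin n) t.succ)
          ((p : Fin (m + 1 + 1) → Fin n) t.castSucc)))
      = ∑ g : Fin (m + 1 + 1) → Fin n, if P g then c ^ (Sd g) else 0 := by
    rw [← Finset.sum_filter]
    exact (Finset.sum_subtype (Finset.univ.filter P) (by simp [hP]) (fun g => c ^ Sd g)).symm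
  -- key bound
  have hkey : (∑ g : Fin (m + 1 + 1) → Fin n, if P g then c ^ (Sd g) else 0)
      ≤ s ^ dist il i0 * μ ^ m := by
    have hterm : ∀ g : Fin (m + 1 + 1) → Fin n,
        (if P g then c ^ (Sd g) else 0)
          ≤ s ^ dist il i0 * (if P g then s ^ (Sd g) else 0) := by
      intro g
      by_cases hg : P g
      · rw [if_pos hg, if_pos hg]
        have hd : dist il i0 ≤ Sd g := by
          have := path_tri dist hrefl htri (m+1) g
          rw [hg.1, hg.2] at this
          exact this
        have h1 : s ^ (Sd g) ≤ s ^ dist il i0 :=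
          pow_le_pow_of_le_one hs0.le hs1.le hd
        have hc' : c ^ (Sd g) = s ^ (Sd g) * s ^ (Sd g) := by
          rw [← mul_pow]
          congr 1
          rw [hs]
          exact (Real.mul_self_sqrt hc0.le).symm
        rw [hc']
        exact mul_le_mul_of_nonneg_right h1 (by positivity)
      · simp [hg]
    calc (∑ g : Fin (m + 1 + 1) → Fin n, if P g then c ^ (Sd g) else 0)
        ≤ ∑ g : Fin (m + 1 + 1) → Fin n, s ^ dist il i0 * (if P g then s ^ (Sd g) else 0) :=
          Finset.sum_le_sum (fun g _ => hterm g)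
      _ = s ^ dist il i0 * ∑ g : Fin (m + 1 + 1) → Fin n, (if P g then s ^ (Sd g) else 0) := by
          rw [Finset.mul_sum]
      _ ≤ s ^ dist il i0 * μ ^ m := by
          refine mul_le_mul_of_nonneg_left ?_ (by positivity)
          exact S_le dist s hs0.le hs1.le μ hμ1 hstep' m i0 il
  rw [hsub]
  have hd0 : (m + 1) - 1 = m := by omega
  -- tsum with indicator
  set T : ℝ := ∑' j : ℕ, (if dist il i0 ≤ j then (1 + j : ℝ) ^ ν * s ^ j else 0) with hT
  have hTsumm : Summable (fun j : ℕ => if dist il i0 ≤ j then (1 + j : ℝ) ^ ν * s ^ j else 0) := by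
    refine Summable.of_nonneg_of_le (fun j => ?_) (fun j => ?_) hsumm
    · split_ifs with h
      · exact hfnn j
      · exact le_rfl
    · split_ifs with h
      · exact le_rfl
      · exact hfnn j
  have hTd : s ^ dist il i0 ≤ T := by
    have h1 := hTsumm.le_tsum (dist il i0) (fun j _ => by
      split_ifs with h
      · exact hfnn j
      · exact le_rfl)
    rw [hT]
    refine le_trans ?_ h1
    simp only [le_refl, if_true]
    have : (1:ℝ) ≤ (1 + (dist il i0 : ℝ)) ^ ν :=
      Real.one_le_rpow (le_add_of_nonneg_right (Nat.cast_nonneg _)) (le_trans zero_le_one hν)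
    nlinarith [pow_nonneg hs0.le (dist il i0)]
  constructor
  · -- first conjunct
    rw [hd0]
    calc (∑ g : Fin (m + 1 + 1) → Fin n, if P g then c ^ (Sd g) else 0)
        ≤ s ^ dist il i0 * μ ^ m := hkey
      _ = μ ^ m * s ^ dist il i0 := mul_comm _ _
      _ ≤ (μ ^ 2) ^ m * T := by
          refine mul_le_mul ?_ hTd (by positivity) (by positivity)
          rw [← pow_mul]
          exact pow_le_pow_right₀ hμ1 (by omega)
  · -- second conjunct
    intro hcs
    have hν0 : (0:ℝ) ≤ ν := le_trans zero_le_one hν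
    have he2 : Real.exp (-ν) * Real.exp (-ν) = Real.exp (-2 * ν) := by
      rw [← Real.exp_add]; ring_nf
    have hsmall : c < (Real.exp (-ν) / 25) ^ 2 := by
      have : (Real.exp (-ν) / 25) ^ 2 = Real.exp (-2 * ν) / 625 := by
        rw [div_pow, pow_two, he2]; norm_num
      rw [this]
      refine lt_of_lt_of_le hcs ?_
      have := Real.exp_pos (-2 * ν)
      rw [div_le_div_iff₀ (by norm_num) (by norm_num)]
      nlinarith
    have hslt : s < Real.exp (-ν) / 25 := by
      have hpos : (0:ℝ) < Real.exp (-ν) / 25 := by positivity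
      rw [hs, show Real.exp (-ν) / 25 = Real.sqrt ((Real.exp (-ν) / 25) ^ 2) from
        (Real.sqrt_sq hpos.le).symm]
      exact Real.sqrt_lt_sqrt hc0.le hsmall
    have hes : Real.exp ν * s < 1 / 25 := by
      have h1 : Real.exp ν * s < Real.exp ν * (Real.exp (-ν) / 25) :=
        mul_lt_mul_of_pos_left hslt (Real.exp_pos ν)
      have h2 : Real.exp ν * (Real.exp (-ν) / 25) = 1 / 25 := by
        rw [mul_div_assoc', ← Real.exp_add]; simp
      rw [← h2]; exact h1
    have hes0 : (0:ℝ) ≤ Real.exp ν * s := by positivity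
    have hes1 : Real.exp ν * s < 1 := lt_trans hes (by norm_num)
    -- μ ≤ 1.1
    have hμ11 : μ ≤ 1.1 := by
      have hpt : ∀ x : ℕ, f x ≤ (Real.exp ν * s) ^ x := by
        intro x
        rw [hf, mul_pow]
        refine mul_le_mul_of_nonneg_right ?_ (by positivity)
        have h1 : (1 + x : ℝ) ≤ Real.exp x := by
          have := Real.add_one_le_exp (x : ℝ)
          linarith
        have h2 : (1 + x : ℝ) ^ ν ≤ (Real.exp x) ^ ν :=
          Real.rpow_le_rpow (by positivity) h1 hν0
        have h3 : (Real.exp (x : ℝ)) ^ ν = Real.exp ν ^ x := by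
          rw [← Real.exp_mul, Real.exp_nat_mul]
        rw [← h3]; exact h2
      have hgsum : Summable (fun x : ℕ => (Real.exp ν * s) ^ x) :=
        summable_geometric_of_lt_one hes0 hes1
      have h4 : μ ≤ ∑' x : ℕ, (Real.exp ν * s) ^ x :=
        hsumm.tsum_le_tsum hpt hgsum
      have h5 : (∑' x : ℕ, (Real.exp ν * s) ^ x) = (1 - Real.exp ν * s)⁻¹ :=
        tsum_geometric_of_lt_one hes0 hes1
      have h6 : (1 - Real.exp ν * s)⁻¹ ≤ (0.96 : ℝ)⁻¹ := by
        apply inv_anti₀ (by norm_num)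
        nlinarith
      have h7 : ((0.96 : ℝ))⁻¹ ≤ 1.1 := by norm_num
      calc μ ≤ _ := h4
        _ = _ := h5
        _ ≤ _ := h6
        _ ≤ _ := h7
    constructor
    · calc (∑ g : Fin (m + 1 + 1) → Fin n, if P g then c ^ (Sd g) else 0)
          ≤ s ^ dist il i0 * μ ^ m := hkey
        _ ≤ (Real.exp ν * s) ^ dist il i0 * (1.1:ℝ) ^ (m+1) := by
            refine mul_le_mul ?_ ?_ (by positivity) (by positivity)
            · refine pow_le_pow_left₀ hs0.le ?_ _
              exact le_mul_of_one_le_left hs0.le (Real.one_le_exp hν0)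
            · calc μ ^ m ≤ (1.1:ℝ) ^ m :=
                  pow_le_pow_left₀ (le_trans zero_le_one hμ1) hμ11 m
                _ ≤ (1.1:ℝ) ^ (m+1) := pow_le_pow_right₀ (by norm_num) (by omega)
        _ = (1.1:ℝ) ^ (m+1) * (Real.exp ν * s) ^ dist il i0 := mul_comm _ _
    · have h8 : (Real.exp ν * s) ^ dist il i0 ≤ (1/25 : ℝ) ^ dist il i0 :=
        pow_le_pow_left₀ hes0 hes.le _
      calc (1.1:ℝ) ^ (m+1) * (Real.exp ν * s) ^ dist il i0
          ≤ (1.1:ℝ) ^ (m+1) * (1/25 : ℝ) ^ dist il i0 :=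
            mul_le_mul_of_nonneg_left h8 (by positivity)
        _ = (1.1:ℝ) ^ (m+1) / 25 ^ dist il i0 := by
            rw [div_pow, mul_div_assoc']; norm_num

end
end
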